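/- Every Radon probability bimeasure on compact Hausdorff spaces X, Y extends to a Radon probability measure on X × Y: if γ : B(X) × B(Y) → [0,1] is countably additive in each variable, satisfies γ(X,Y) = 1, and is inner regular by compact sets separately in each variable, then there exists a Radon probability measure p on X × Y with p(A × B) = γ(A, B) for all Borel A ⊆ X, B ⊆ Y. -/

import Mathlib

open MeasureTheory Set

namespace RadonBimeasure

variable {X Y : Type*} [TopologicalSpace X] [CompactSpace X] [T2Space X]
    [TopologicalSpace Y] [CompactSpace Y] [T2Space Y]
    [MeasurableSpace X] [BorelSpace X] [MeasurableSpace Y] [BorelSpace Y]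

/-- Bundled hypotheses of a Radon probability bimeasure. -/
structure IsRB (γ : Set X → Set Y → ENNReal) : Prop where
  bound : ∀ A B, γ A B ≤ 1
  total : γ Set.univ Set.univ = 1
  addLeft : ∀ B : Set Y, MeasurableSet B → ∀ A : ℕ → Set X,
      (∀ n, MeasurableSet (A n)) → Pairwise (Function.onFun Disjoint A) →
      γ (⋃ n, A n) B = ∑' n, γ (A n) B
  addRight : ∀ A : Set X, MeasurableSet A → ∀ B : ℕ → Set Y,
      (∀ n, MeasurableSet (B n)) → Pairwise (Function.onFun Disjoint B) →
      γ A (⋃ n, B n) = ∑' n, γ A (B n)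
  regLeft : ∀ A B, MeasurableSet A → MeasurableSet B →
      γ A B = ⨆ (K : Set X) (_ : IsCompact K ∧ K ⊆ A), γ K B
  regRight : ∀ A B, MeasurableSet A → MeasurableSet B →
      γ A B = ⨆ (L : Set Y) (_ : IsCompact L ∧ L ⊆ B), γ A L

variable {γ : Set X → Set Y → ENNReal} (h : IsRB γ)
include h

set_option linter.unusedSectionVars false

lemma IsRB.ne_top (A B) : γ A B ≠ ⊤ := (h.bound A B).trans_lt (by norm_num) |>.ne

lemma IsRB.empty_left {B : Set Y} (hB : MeasurableSet B) : γ ∅ B = 0 := by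
  by_contra h0
  have h1 : γ (⋃ _ : ℕ, (∅ : Set X)) B = ∑' _ : ℕ, γ ∅ B :=
    h.addLeft B hB _ (fun _ => MeasurableSet.empty) (fun i j _ => disjoint_bot_left)
  rw [Set.iUnion_empty, ENNReal.tsum_const_eq_top_of_ne_zero h0] at h1
  exact h.ne_top ∅ B h1

lemma IsRB.empty_right {A : Set X} (hA : MeasurableSet A) : γ A ∅ = 0 := by
  by_contra h0
  have h1 : γ A (⋃ _ : ℕ, (∅ : Set Y)) = ∑' _ : ℕ, γ A ∅ :=
    h.addRight A hA _ (fun _ => MeasurableSet.empty) (fun i j _ => disjoint_bot_left)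
  rw [Set.iUnion_empty, ENNReal.tsum_const_eq_top_of_ne_zero h0] at h1
  exact h.ne_top A ∅ h1

/-- The measure `γ (·, B)` on `X`. -/
noncomputable def IsRB.mLeft (B : Set Y) (hB : MeasurableSet B) : Measure X :=
  Measure.ofMeasurable (fun A _ => γ A B) (h.empty_left hB)
    (fun A hA hd => h.addLeft B hB A hA hd)

lemma IsRB.mLeft_apply {B : Set Y} (hB : MeasurableSet B) {A : Set X}
    (hA : MeasurableSet A) : h.mLeft B hB A = γ A B :=
  Measure.ofMeasurable_apply A hA

/-- The measure `γ (A, ·)` on `Y`. -/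
noncomputable def IsRB.mRight (A : Set X) (hA : MeasurableSet A) : Measure Y :=
  Measure.ofMeasurable (fun B _ => γ A B) (h.empty_right hA)
    (fun B hB hd => h.addRight A hA B hB hd)

lemma IsRB.mRight_apply {A : Set X} (hA : MeasurableSet A) {B : Set Y}
    (hB : MeasurableSet B) : h.mRight A hA B = γ A B :=
  Measure.ofMeasurable_apply B hB

lemma IsRB.mono_left {A A' : Set X} {B : Set Y} (hA : MeasurableSet A)
    (hA' : MeasurableSet A') (hB : MeasurableSet B) (hs : A ⊆ A') : γ A B ≤ γ A' B := by
  rw [← h.mLeft_apply hB hA, ← h.mLeft_apply hB hA']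
  exact measure_mono hs

lemma IsRB.mono_right {A : Set X} {B B' : Set Y} (hA : MeasurableSet A)
    (hB : MeasurableSet B) (hB' : MeasurableSet B') (hs : B ⊆ B') : γ A B ≤ γ A B' := by
  rw [← h.mRight_apply hA hB, ← h.mRight_apply hA hB']
  exact measure_mono hs

lemma IsRB.split_left {A C : Set X} {B : Set Y} (hA : MeasurableSet A)
    (hC : MeasurableSet C) (hB : MeasurableSet B) :
    γ A B = γ (A ∩ C) B + γ (A \ C) B := by
  rw [← h.mLeft_apply hB hA, ← h.mLeft_apply hB (hA.inter hC),
    ← h.mLeft_apply hB (hA.diff hC)]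
  exact (measure_inter_add_diff A hC).symm

lemma IsRB.split_right {A : Set X} {B D : Set Y} (hA : MeasurableSet A)
    (hB : MeasurableSet B) (hD : MeasurableSet D) :
    γ A B = γ A (B ∩ D) + γ A (B \ D) := by
  rw [← h.mRight_apply hA hB, ← h.mRight_apply hA (hB.inter hD),
    ← h.mRight_apply hA (hB.diff hD)]
  exact (measure_inter_add_diff B hD).symm

lemma IsRB.compl_left {A : Set X} {B : Set Y} (hA : MeasurableSet A)
    (hB : MeasurableSet B) : γ Aᶜ B + γ A B = γ univ B := by
  have := h.split_left (A := univ) (C := A) (B := B) MeasurableSet.univ hA hB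
  rw [Set.univ_inter] at this
  rw [this, add_comm]
  congr 1
  · rw [Set.compl_eq_univ_diff]

/-- From the sup-form of inner regularity, extract a near-optimal compact set. -/
lemma IsRB.exists_compact_left {A : Set X} {B : Set Y} (hA : MeasurableSet A)
    (hB : MeasurableSet B) {ε : ENNReal} (hε : ε ≠ 0) :
    ∃ K : Set X, IsCompact K ∧ K ⊆ A ∧ γ A B ≤ γ K B + ε := by
  by_cases hle : γ A B ≤ ε
  · exact ⟨∅, isCompact_empty, empty_subset _, hle.trans le_add_self⟩
  push_neg at hle
  have hreg := h.regLeft A B hA hB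
  have hlt : γ A B - ε < γ A B :=
    ENNReal.sub_lt_self (h.ne_top A B) (by intro h0; rw [h0] at hle; simp at hle) hε
  rw [hreg] at hlt
  obtain ⟨K, hKlt⟩ := lt_iSup_iff.mp hlt
  rw [lt_iSup_iff] at hKlt
  obtain ⟨⟨hKc, hKA⟩, hKlt⟩ := hKlt
  refine ⟨K, hKc, hKA, ?_⟩
  rw [← hreg] at hKlt
  have := (ENNReal.sub_lt_iff_lt_right (ne_top_of_lt hle) hle.le).mp hKlt
  exact le_of_lt (by simpa [add_comm] using this)

lemma IsRB.exists_compact_right {A : Set X} {B : Set Y} (hA : MeasurableSet A)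
    (hB : MeasurableSet B) {ε : ENNReal} (hε : ε ≠ 0) :
    ∃ L : Set Y, IsCompact L ∧ L ⊆ B ∧ γ A B ≤ γ A L + ε := by
  by_cases hle : γ A B ≤ ε
  · exact ⟨∅, isCompact_empty, empty_subset _, hle.trans le_add_self⟩
  push_neg at hle
  have hreg := h.regRight A B hA hB
  have hlt : γ A B - ε < γ A B :=
    ENNReal.sub_lt_self (h.ne_top A B) (by intro h0; rw [h0] at hle; simp at hle) hε
  rw [hreg] at hlt
  obtain ⟨L, hLlt⟩ := lt_iSup_iff.mp hlt
  rw [lt_iSup_iff] at hLlt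
  obtain ⟨⟨hLc, hLB⟩, hLlt⟩ := hLlt
  refine ⟨L, hLc, hLB, ?_⟩
  rw [← hreg] at hLlt
  have := (ENNReal.sub_lt_iff_lt_right (ne_top_of_lt hle) hle.le).mp hLlt
  exact le_of_lt (by simpa [add_comm] using this)

/-- Joint inner regularity by compact rectangles. -/
lemma IsRB.exists_compact_rect {A : Set X} {B : Set Y} (hA : MeasurableSet A)
    (hB : MeasurableSet B) {ε : ENNReal} (hε : ε ≠ 0) :
    ∃ K L, IsCompact K ∧ K ⊆ A ∧ IsCompact L ∧ L ⊆ B ∧ γ A B ≤ γ K L + ε := by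
  have h2 : (ε / 2) ≠ 0 := by simp [hε]
  obtain ⟨K, hKc, hKA, hK⟩ := h.exists_compact_left hA hB h2
  obtain ⟨L, hLc, hLB, hL⟩ :=
    h.exists_compact_right hKc.isClosed.measurableSet hB h2
  refine ⟨K, L, hKc, hKA, hLc, hLB, ?_⟩
  calc γ A B ≤ γ K B + ε / 2 := hK
    _ ≤ (γ K L + ε / 2) + ε / 2 := add_le_add_left hL _
    _ = γ K L + ε := by rw [add_assoc, ENNReal.add_halves]

/-- Outer regularity in the left variable. -/
lemma IsRB.exists_open_left {A : Set X} {B : Set Y} (hA : MeasurableSet A)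
    (hB : MeasurableSet B) {ε : ENNReal} (hε : ε ≠ 0) :
    ∃ U : Set X, IsOpen U ∧ A ⊆ U ∧ γ U B ≤ γ A B + ε := by
  obtain ⟨K, hKc, hKA, hK⟩ := h.exists_compact_left hA.compl hB hε
  refine ⟨Kᶜ, hKc.isClosed.isOpen_compl, ?_, ?_⟩
  · rw [Set.subset_compl_iff_disjoint_left]
    exact Set.disjoint_left.mpr fun x hx hx2 => (hKA hx) hx2
  · have e1 : γ Kᶜ B + γ K B = γ univ B := h.compl_left hKc.isClosed.measurableSet hB
    have e2 : γ Aᶜ B + γ A B = γ univ B := h.compl_left hA hB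
    have : γ Kᶜ B + γ K B = γ Aᶜ B + γ A B := by rw [e1, e2]
    have hle : γ Kᶜ B + γ K B ≤ (γ A B + ε) + γ K B := by
      rw [this]
      calc γ Aᶜ B + γ A B ≤ (γ K B + ε) + γ A B := add_le_add_left hK _
        _ = (γ A B + ε) + γ K B := by ring
    exact (WithTop.add_le_add_iff_right (h.ne_top K B)).mp hle

lemma IsRB.exists_open_right {A : Set X} {B : Set Y} (hA : MeasurableSet A)
    (hB : MeasurableSet B) {ε : ENNReal} (hε : ε ≠ 0) :
    ∃ V : Set Y, IsOpen V ∧ B ⊆ V ∧ γ A V ≤ γ A B + ε := by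
  obtain ⟨L, hLc, hLB, hL⟩ := h.exists_compact_right hA hB.compl hε
  refine ⟨Lᶜ, hLc.isClosed.isOpen_compl, ?_, ?_⟩
  · rw [Set.subset_compl_iff_disjoint_left]
    exact Set.disjoint_left.mpr fun x hx hx2 => (hLB hx) hx2
  · have e1 : γ A Lᶜ + γ A L = γ A univ := by
      have := h.split_right (B := univ) (D := L) hA MeasurableSet.univ
        hLc.isClosed.measurableSet
      rw [Set.univ_inter] at this
      rw [this, add_comm]
      congr 1
      rw [Set.compl_eq_univ_diff]
    have e2 : γ A Bᶜ + γ A B = γ A univ := by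
      have := h.split_right (B := univ) (D := B) hA MeasurableSet.univ hB
      rw [Set.univ_inter] at this
      rw [this, add_comm]
      congr 1
      rw [Set.compl_eq_univ_diff]
    have : γ A Lᶜ + γ A L = γ A Bᶜ + γ A B := by rw [e1, e2]
    have hle : γ A Lᶜ + γ A L ≤ (γ A B + ε) + γ A L := by
      rw [this]
      calc γ A Bᶜ + γ A B ≤ (γ A L + ε) + γ A B := add_le_add_left hL _
        _ = (γ A B + ε) + γ A L := by ring
    exact (WithTop.add_le_add_iff_right (h.ne_top A L)).mp hle

/-- Outer regularity by open rectangles. -/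
lemma IsRB.exists_open_rect {A : Set X} {B : Set Y} (hA : MeasurableSet A)
    (hB : MeasurableSet B) {ε : ENNReal} (hε : ε ≠ 0) :
    ∃ U V, IsOpen U ∧ A ⊆ U ∧ IsOpen V ∧ B ⊆ V ∧ γ U V ≤ γ A B + ε := by
  have h2 : (ε / 2) ≠ 0 := by simp [hε]
  obtain ⟨U, hUo, hAU, hU⟩ := h.exists_open_left hA hB h2
  obtain ⟨V, hVo, hBV, hV⟩ := h.exists_open_right hUo.measurableSet hB h2
  refine ⟨U, V, hUo, hAU, hVo, hBV, ?_⟩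
  calc γ U V ≤ γ U B + ε / 2 := hV
    _ ≤ (γ A B + ε / 2) + ε / 2 := add_le_add_left hU _
    _ = γ A B + ε := by rw [add_assoc, ENNReal.add_halves]
section Grid

variable {ι : Type*} [Fintype ι]

/-- Finite subadditivity over rectangle covers (grid lemma). -/
lemma IsRB.grid (U : ι → Set X) (V : ι → Set Y)
    (hU : ∀ i, MeasurableSet (U i)) (hV : ∀ i, MeasurableSet (V i))
    {A : Set X} {B : Set Y} (hA : MeasurableSet A) (hB : MeasurableSet B)
    (hcov : A ×ˢ B ⊆ ⋃ i, U i ×ˢ V i) :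
    γ A B ≤ ∑ i, γ (U i) (V i) := by
  classical
  rcases isEmpty_or_nonempty ι with hι | hι
  · -- empty index: A ×ˢ B ⊆ ∅
    have : A ×ˢ B = ∅ := by
      rw [Set.iUnion_of_empty] at hcov
      exact Set.subset_empty_iff.mp hcov
    rcases Set.prod_eq_empty_iff.mp this with hAe | hBe
    · rw [hAe, h.empty_left hB]; exact zero_le
    · rw [hBe, h.empty_right hA]; exact zero_le
  set P : (ι → Bool) → Set X := fun f => A ∩ ⋂ i, (if f i then U i else (U i)ᶜ) with hPdef
  set Q : (ι → Bool) → Set Y := fun g => B ∩ ⋂ i, (if g i then V i else (V i)ᶜ) with hQdef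
  have hPsub : ∀ f i, P f ⊆ (if f i then U i else (U i)ᶜ) :=
    fun f i => (Set.inter_subset_right).trans (Set.iInter_subset _ i)
  have hQsub : ∀ g i, Q g ⊆ (if g i then V i else (V i)ᶜ) :=
    fun g i => (Set.inter_subset_right).trans (Set.iInter_subset _ i)
  have hPm : ∀ f, MeasurableSet (P f) := fun f =>
    hA.inter (MeasurableSet.iInter fun i => by
      by_cases hfi : f i <;> simp only [hfi, if_true, if_false] <;>
        [exact hU i; exact (hU i).compl])
  have hQm : ∀ g, MeasurableSet (Q g) := fun g =>
    hB.inter (MeasurableSet.iInter fun i => by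
      by_cases hgi : g i <;> simp only [hgi, if_true, if_false] <;>
        [exact hV i; exact (hV i).compl])
  have hPd : ∀ f g : ι → Bool, f ≠ g → Disjoint (P f) (P g) := by
    intro f g hfg
    obtain ⟨i, hi⟩ := Function.ne_iff.mp hfg
    have h1 := hPsub f i
    have h2 := hPsub g i
    cases hf : f i <;> cases hg : g i
    · exact absurd (hf.trans hg.symm) hi
    · rw [hf, if_neg Bool.false_ne_true] at h1
      rw [hg, if_pos rfl] at h2
      exact Set.disjoint_of_subset h1 h2 disjoint_compl_left
    · rw [hf, if_pos rfl] at h1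
      rw [hg, if_neg Bool.false_ne_true] at h2
      exact Set.disjoint_of_subset h1 h2 disjoint_compl_right
    · exact absurd (hf.trans hg.symm) hi
  have hQd : ∀ f g : ι → Bool, f ≠ g → Disjoint (Q f) (Q g) := by
    intro f g hfg
    obtain ⟨i, hi⟩ := Function.ne_iff.mp hfg
    have h1 := hQsub f i
    have h2 := hQsub g i
    cases hf : f i <;> cases hg : g i
    · exact absurd (hf.trans hg.symm) hi
    · rw [hf, if_neg Bool.false_ne_true] at h1
      rw [hg, if_pos rfl] at h2
      exact Set.disjoint_of_subset h1 h2 disjoint_compl_left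
    · rw [hf, if_pos rfl] at h1
      rw [hg, if_neg Bool.false_ne_true] at h2
      exact Set.disjoint_of_subset h1 h2 disjoint_compl_right
    · exact absurd (hf.trans hg.symm) hi
  have hPuniv : ⋃ f, P f = A := by
    apply Set.Subset.antisymm
    · exact Set.iUnion_subset fun f => Set.inter_subset_left
    · intro x hx
      refine Set.mem_iUnion.mpr ⟨fun i => decide (x ∈ U i), hx, ?_⟩
      refine Set.mem_iInter.mpr fun i => ?_
      by_cases hxi : x ∈ U i <;> simp [hxi]
  have hQuniv : ⋃ g, Q g = B := by
    apply Set.Subset.antisymm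
    · exact Set.iUnion_subset fun g => Set.inter_subset_left
    · intro y hy
      refine Set.mem_iUnion.mpr ⟨fun i => decide (y ∈ V i), hy, ?_⟩
      refine Set.mem_iInter.mpr fun i => ?_
      by_cases hyi : y ∈ V i <;> simp [hyi]
  -- additivity over the grid
  have sumP : ∀ {B' : Set Y}, MeasurableSet B' →
      γ A B' = ∑ f : ι → Bool, γ (P f) B' := by
    intro B' hB'
    have h1 : (h.mLeft B' hB') (⋃ f ∈ (Finset.univ : Finset (ι → Bool)), P f)
        = ∑ f : ι → Bool, (h.mLeft B' hB') (P f) :=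
      measure_biUnion_finset
        (fun f _ g _ hfg => hPd f g hfg) (fun f _ => hPm f)
    have h2 : (⋃ f ∈ (Finset.univ : Finset (ι → Bool)), P f) = A := by
      simpa using hPuniv
    rw [h2] at h1
    rw [h.mLeft_apply hB' hA] at h1
    rw [h1]
    exact Finset.sum_congr rfl fun f _ => h.mLeft_apply hB' (hPm f)
  have sumQ : ∀ {A' : Set X}, MeasurableSet A' →
      γ A' B = ∑ g : ι → Bool, γ A' (Q g) := by
    intro A' hA'
    have h1 : (h.mRight A' hA') (⋃ g ∈ (Finset.univ : Finset (ι → Bool)), Q g)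
        = ∑ g : ι → Bool, (h.mRight A' hA') (Q g) :=
      measure_biUnion_finset
        (fun f _ g _ hfg => hQd f g hfg) (fun g _ => hQm g)
    have h2 : (⋃ g ∈ (Finset.univ : Finset (ι → Bool)), Q g) = B := by
      simpa using hQuniv
    rw [h2] at h1
    rw [h.mRight_apply hA' hB] at h1
    rw [h1]
    exact Finset.sum_congr rfl fun g _ => h.mRight_apply hA' (hQm g)
  have key : γ A B = ∑ p : (ι → Bool) × (ι → Bool), γ (P p.1) (Q p.2) := by
    rw [Fintype.sum_prod_type]
    rw [sumP hB]
    exact Finset.sum_congr rfl fun f _ => sumQ (hPm f)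
  -- each nonempty atom is inside some rectangle
  have hatom : ∀ p : (ι → Bool) × (ι → Bool), (P p.1 ×ˢ Q p.2).Nonempty →
      ∃ i, P p.1 ⊆ U i ∧ Q p.2 ⊆ V i := by
    rintro ⟨f, g⟩ ⟨⟨x, y⟩, hx, hy⟩
    have hxA : x ∈ A := hx.1
    have hyB : y ∈ B := hy.1
    obtain ⟨i, hxy⟩ := Set.mem_iUnion.mp (hcov (Set.mk_mem_prod hxA hyB))
    refine ⟨i, ?_, ?_⟩
    · have hfi : f i = true := by
        cases hfv : f i
        · exfalso
          have hsub := hPsub f i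
          rw [hfv, if_neg Bool.false_ne_true] at hsub
          exact (hsub hx) hxy.1
        · rfl
      have hsub := hPsub f i
      rw [hfi, if_pos rfl] at hsub
      exact fun z hz => hsub hz
    · have hgi : g i = true := by
        cases hgv : g i
        · exfalso
          have hsub := hQsub g i
          rw [hgv, if_neg Bool.false_ne_true] at hsub
          exact (hsub hy) hxy.2
        · rfl
      have hsub := hQsub g i
      rw [hgi, if_pos rfl] at hsub
      exact fun z hz => hsub hz
  -- choice of a rectangle for each pair
  let c : (ι → Bool) × (ι → Bool) → ι := fun p =>
    if hp : (P p.1 ×ˢ Q p.2).Nonempty then (hatom p hp).choose else Classical.arbitrary ι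
  have hc : ∀ p, (P p.1 ×ˢ Q p.2).Nonempty → P p.1 ⊆ U (c p) ∧ Q p.2 ⊆ V (c p) := by
    intro p hp
    simp only [c, dif_pos hp]
    exact (hatom p hp).choose_spec
  set Φ : Finset ((ι → Bool) × (ι → Bool)) :=
    Finset.univ.filter (fun p => (P p.1 ×ˢ Q p.2).Nonempty) with hΦdef
  have keyΦ : γ A B = ∑ p ∈ Φ, γ (P p.1) (Q p.2) := by
    rw [key, hΦdef]
    symm
    apply Finset.sum_filter_of_ne
    intro p _ hne
    by_contra hemp
    rcases Set.prod_eq_empty_iff.mp (Set.not_nonempty_iff_eq_empty.mp hemp) with h0 | h0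
    · rw [h0, h.empty_left (hQm p.2)] at hne; exact hne rfl
    · rw [h0, h.empty_right (hPm p.1)] at hne; exact hne rfl
  have fib : ∑ p ∈ Φ, γ (P p.1) (Q p.2)
      = ∑ i : ι, ∑ p ∈ Φ.filter (fun p => c p = i), γ (P p.1) (Q p.2) :=
    (Finset.sum_fiberwise_of_maps_to (fun p _ => Finset.mem_univ (c p)) _).symm
  rw [keyΦ, fib]
  apply Finset.sum_le_sum
  intro i _
  set S : Finset (ι → Bool) := Finset.univ.filter (fun f => P f ⊆ U i) with hSdef
  set T : Finset (ι → Bool) := Finset.univ.filter (fun g => Q g ⊆ V i) with hTdef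
  have hsub : Φ.filter (fun p => c p = i) ⊆ S ×ˢ T := by
    intro p hp
    rw [Finset.mem_filter] at hp
    obtain ⟨hpΦ, hpc⟩ := hp
    rw [hΦdef, Finset.mem_filter] at hpΦ
    obtain ⟨-, hpne⟩ := hpΦ
    obtain ⟨h1, h2⟩ := hc p hpne
    rw [hpc] at h1 h2
    rw [Finset.mem_product, hSdef, hTdef, Finset.mem_filter, Finset.mem_filter]
    exact ⟨⟨Finset.mem_univ _, h1⟩, ⟨Finset.mem_univ _, h2⟩⟩
  calc ∑ p ∈ Φ.filter (fun p => c p = i), γ (P p.1) (Q p.2)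
      ≤ ∑ p ∈ S ×ˢ T, γ (P p.1) (Q p.2) :=
        Finset.sum_le_sum_of_subset hsub
    _ = ∑ f ∈ S, ∑ g ∈ T, γ (P f) (Q g) := Finset.sum_product _ _ _
    _ = ∑ f ∈ S, γ (P f) (⋃ g ∈ T, Q g) := by
        refine Finset.sum_congr rfl fun f _ => ?_
        have h1 : (h.mRight (P f) (hPm f)) (⋃ g ∈ T, Q g)
            = ∑ g ∈ T, (h.mRight (P f) (hPm f)) (Q g) :=
          measure_biUnion_finset (fun a _ b _ hab => hQd a b hab) (fun g _ => hQm g)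
        rw [h.mRight_apply (hPm f) (T.measurableSet_biUnion (fun g _ => hQm g))] at h1
        rw [h1]
        exact Finset.sum_congr rfl fun g _ => (h.mRight_apply (hPm f) (hQm g)).symm
    _ = γ (⋃ f ∈ S, P f) (⋃ g ∈ T, Q g) := by
        have hBT : MeasurableSet (⋃ g ∈ T, Q g) := T.measurableSet_biUnion (fun g _ => hQm g)
        have h1 : (h.mLeft _ hBT) (⋃ f ∈ S, P f)
            = ∑ f ∈ S, (h.mLeft _ hBT) (P f) :=
          measure_biUnion_finset (fun a _ b _ hab => hPd a b hab) (fun f _ => hPm f)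
        rw [h.mLeft_apply hBT (S.measurableSet_biUnion (fun f _ => hPm f))] at h1
        rw [h1]
        exact Finset.sum_congr rfl fun f _ => (h.mLeft_apply hBT (hPm f)).symm
    _ ≤ γ (U i) (V i) := by
        have hS : (⋃ f ∈ S, P f) ⊆ U i :=
          Set.iUnion₂_subset fun f hf => (Finset.mem_filter.mp hf).2
        have hT : (⋃ g ∈ T, Q g) ⊆ V i :=
          Set.iUnion₂_subset fun g hg => (Finset.mem_filter.mp hg).2
        calc γ (⋃ f ∈ S, P f) (⋃ g ∈ T, Q g)
            ≤ γ (U i) (⋃ g ∈ T, Q g) :=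
              h.mono_left (S.measurableSet_biUnion (fun f _ => hPm f)) (hU i)
                (T.measurableSet_biUnion (fun g _ => hQm g)) hS
          _ ≤ γ (U i) (V i) :=
              h.mono_right (hU i) (T.measurableSet_biUnion (fun g _ => hQm g)) (hV i) hT

end Grid

omit h in
lemma geom_aux (δ : ENNReal) : ∑' n : ℕ, δ * 2⁻¹ ^ n = 2 * δ := by
  rw [ENNReal.tsum_mul_left, ENNReal.tsum_geometric, ENNReal.one_sub_inv_two, inv_inv, mul_comm]

/-- Countable subadditivity over rectangle covers. -/
lemma IsRB.cover_countable {A : Set X} {B : Set Y} (hA : MeasurableSet A)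
    (hB : MeasurableSet B) (C : ℕ → Set X) (D : ℕ → Set Y)
    (hC : ∀ n, MeasurableSet (C n)) (hD : ∀ n, MeasurableSet (D n))
    (hcov : A ×ˢ B ⊆ ⋃ n, C n ×ˢ D n) :
    γ A B ≤ ∑' n, γ (C n) (D n) := by
  refine ENNReal.le_of_forall_pos_le_add fun ε hε hfin => ?_
  set δ : ENNReal := (ε : ENNReal) / 4 with hδdef
  have hδ : δ ≠ 0 := by
    simp only [hδdef, ne_eq, ENNReal.div_eq_zero_iff]
    push_neg
    exact ⟨by exact_mod_cast hε.ne', by norm_num⟩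
  obtain ⟨K, L, hKc, hKA, hLc, hLB, hKL⟩ := h.exists_compact_rect hA hB hδ
  have hopen : ∀ n : ℕ, ∃ UV : Set X × Set Y, IsOpen UV.1 ∧ C n ⊆ UV.1 ∧ IsOpen UV.2 ∧
      D n ⊆ UV.2 ∧ γ UV.1 UV.2 ≤ γ (C n) (D n) + δ * 2⁻¹ ^ n := by
    intro n
    have hδn : δ * 2⁻¹ ^ n ≠ 0 :=
      mul_ne_zero hδ (pow_ne_zero n (by simp))
    obtain ⟨U, V, hUo, hCU, hVo, hDV, hUV⟩ := h.exists_open_rect (hC n) (hD n) hδn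
    exact ⟨(U, V), hUo, hCU, hVo, hDV, hUV⟩
  choose UV hUo hCU hVo hDV hUV using hopen
  set U : ℕ → Set X := fun n => (UV n).1 with hUdef
  set V : ℕ → Set Y := fun n => (UV n).2 with hVdef
  have hKLcov : K ×ˢ L ⊆ ⋃ n, U n ×ˢ V n :=
    (Set.prod_mono hKA hLB).trans (hcov.trans
      (Set.iUnion_mono fun n => Set.prod_mono (hCU n) (hDV n)))
  obtain ⟨F, hF⟩ := (hKc.prod hLc).elim_finite_subcover (fun n => U n ×ˢ V n)
    (fun n => (hUo n).prod (hVo n)) hKLcov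
  have hgrid : γ K L ≤ ∑ n ∈ F, γ (U n) (V n) := by
    have hcov' : K ×ˢ L ⊆ ⋃ i : {n // n ∈ F}, U i.1 ×ˢ V i.1 := by
      intro z hz
      obtain ⟨n, hnF, hn⟩ := Set.mem_iUnion₂.mp (hF hz)
      exact Set.mem_iUnion.mpr ⟨⟨n, hnF⟩, hn⟩
    have := h.grid (ι := {n // n ∈ F}) (fun i => U i.1) (fun i => V i.1)
      (fun i => (hUo i.1).measurableSet) (fun i => (hVo i.1).measurableSet)
      hKc.isClosed.measurableSet hLc.isClosed.measurableSet hcov'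
    rwa [Finset.sum_coe_sort F (fun n => γ (U n) (V n))] at this
  have htsum : ∑' n, γ (U n) (V n) ≤ (∑' n, γ (C n) (D n)) + 2 * δ := by
    calc ∑' n, γ (U n) (V n) ≤ ∑' n, (γ (C n) (D n) + δ * 2⁻¹ ^ n) :=
          ENNReal.tsum_le_tsum hUV
      _ = (∑' n, γ (C n) (D n)) + ∑' n : ℕ, δ * 2⁻¹ ^ n := ENNReal.tsum_add
      _ = (∑' n, γ (C n) (D n)) + 2 * δ := by rw [geom_aux]
  have h3δ : (2 * δ + δ : ENNReal) ≤ ε := by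
    have h4 : (δ * 4 : ENNReal) = ε := by
      rw [hδdef]
      exact ENNReal.div_mul_cancel (by norm_num) (by norm_num)
    calc (2 * δ + δ : ENNReal) = δ * 3 := by ring
      _ ≤ δ * 4 := by gcongr <;> norm_num
      _ = ε := h4
  calc γ A B ≤ γ K L + δ := hKL
    _ ≤ (∑ n ∈ F, γ (U n) (V n)) + δ := add_le_add_left hgrid _
    _ ≤ (∑' n, γ (U n) (V n)) + δ := add_le_add_left (ENNReal.sum_le_tsum F) _
    _ ≤ ((∑' n, γ (C n) (D n)) + 2 * δ) + δ := add_le_add_left htsum _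
    _ = (∑' n, γ (C n) (D n)) + (2 * δ + δ) := by ring
    _ ≤ (∑' n, γ (C n) (D n)) + ε := add_le_add_right h3δ _

variable (γ) in
/-- Infimum of `γ` over measurable rectangles containing a set. -/
noncomputable def rho : Set (X × Y) → ENNReal := fun E =>
  sInf {c | ∃ A B, MeasurableSet A ∧ MeasurableSet B ∧ E ⊆ A ×ˢ B ∧ c = γ A B}

omit h in
lemma rho_le {E : Set (X × Y)} {A : Set X} {B : Set Y} (hA : MeasurableSet A)
    (hB : MeasurableSet B) (hE : E ⊆ A ×ˢ B) : rho γ E ≤ γ A B :=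
  sInf_le ⟨A, B, hA, hB, hE, rfl⟩

omit h in
lemma rho_le_one (E : Set (X × Y)) (hb : ∀ A B, γ A B ≤ 1) : rho γ E ≤ 1 := by
  refine (rho_le MeasurableSet.univ MeasurableSet.univ ?_).trans (hb _ _)
  rw [Set.univ_prod_univ]; exact Set.subset_univ E

lemma IsRB.rho_empty : rho γ (∅ : Set (X × Y)) = 0 :=
  le_antisymm ((rho_le MeasurableSet.empty MeasurableSet.empty (empty_subset _)).trans_eq
    (h.empty_left MeasurableSet.empty)) zero_le

lemma IsRB.rho_ne_top (E : Set (X × Y)) : rho γ E ≠ ⊤ :=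
  ((rho_le_one E h.bound).trans_lt (by norm_num)).ne

lemma IsRB.rho_exists (E : Set (X × Y)) {ε : ENNReal} (hε : ε ≠ 0) :
    ∃ A B, MeasurableSet A ∧ MeasurableSet B ∧ E ⊆ A ×ˢ B ∧ γ A B ≤ rho γ E + ε := by
  have hlt : rho γ E < rho γ E + ε := ENNReal.lt_add_right (h.rho_ne_top E) hε
  have : sInf {c | ∃ A B, MeasurableSet A ∧ MeasurableSet B ∧ E ⊆ A ×ˢ B ∧ c = γ A B}
      < rho γ E + ε := hlt
  obtain ⟨c, ⟨A, B, hA, hB, hE, rfl⟩, hc⟩ := sInf_lt_iff.mp this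
  exact ⟨A, B, hA, hB, hE, hc.le⟩

/-- The outer measure generated by countable rectangle covers. -/
noncomputable def IsRB.mstar : OuterMeasure (X × Y) :=
  OuterMeasure.ofFunction (rho γ) h.rho_empty

lemma IsRB.mstar_le_rho (E : Set (X × Y)) : h.mstar E ≤ rho γ E :=
  OuterMeasure.ofFunction_le E

lemma IsRB.mstar_le_one (E : Set (X × Y)) : h.mstar E ≤ 1 :=
  (h.mstar_le_rho E).trans (rho_le_one E h.bound)

lemma IsRB.mstar_ne_top (E : Set (X × Y)) : h.mstar E ≠ ⊤ :=
  ((h.mstar_le_one E).trans_lt (by norm_num)).ne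

/-- Near-optimal countable rectangle covers for `mstar`. -/
lemma IsRB.mstar_exists_cover (S : Set (X × Y)) {ε : ENNReal} (hε : ε ≠ 0) :
    ∃ (C : ℕ → Set X) (D : ℕ → Set Y), (∀ n, MeasurableSet (C n)) ∧
      (∀ n, MeasurableSet (D n)) ∧ S ⊆ ⋃ n, C n ×ˢ D n ∧
      ∑' n, γ (C n) (D n) ≤ h.mstar S + ε := by
  have h2 : (ε / 2) ≠ 0 := by simp [hε]
  have hlt : h.mstar S < h.mstar S + ε / 2 := ENNReal.lt_add_right (h.mstar_ne_top S) h2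
  rw [IsRB.mstar, OuterMeasure.ofFunction_apply] at hlt
  obtain ⟨t, hlt⟩ := iInf_lt_iff.mp hlt
  obtain ⟨hcov, hlt⟩ := iInf_lt_iff.mp hlt
  -- choose near-optimal rectangles around each `t n`
  have hrect : ∀ n : ℕ, ∃ CD : Set X × Set Y, MeasurableSet CD.1 ∧ MeasurableSet CD.2 ∧
      t n ⊆ CD.1 ×ˢ CD.2 ∧ γ CD.1 CD.2 ≤ rho γ (t n) + (ε / 4) * 2⁻¹ ^ n := by
    intro n
    have hδn : (ε / 4) * 2⁻¹ ^ n ≠ 0 :=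
      mul_ne_zero (by simp [hε]) (pow_ne_zero n (by simp))
    obtain ⟨A, B, hA, hB, hsub, hle⟩ := h.rho_exists (t n) hδn
    exact ⟨(A, B), hA, hB, hsub, hle⟩
  choose CD hC hD hsub hle using hrect
  refine ⟨fun n => (CD n).1, fun n => (CD n).2, hC, hD, ?_, ?_⟩
  · exact hcov.trans (Set.iUnion_mono hsub)
  · calc ∑' n, γ (CD n).1 (CD n).2
        ≤ ∑' n, (rho γ (t n) + (ε / 4) * 2⁻¹ ^ n) := ENNReal.tsum_le_tsum hle
      _ = (∑' n, rho γ (t n)) + ∑' n : ℕ, (ε / 4) * 2⁻¹ ^ n := ENNReal.tsum_add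
      _ = (∑' n, rho γ (t n)) + 2 * (ε / 4) := by rw [geom_aux]
      _ ≤ (h.mstar S + ε / 2) + 2 * (ε / 4) := add_le_add_left hlt.le _
      _ = h.mstar S + (ε / 2 + 2 * (ε / 4)) := by ring
      _ ≤ h.mstar S + ε := by
          apply add_le_add_right
          have : (2 : ENNReal) * (ε / 4) ≤ ε / 2 := by
            rw [ENNReal.div_eq_inv_mul, ENNReal.div_eq_inv_mul, ← mul_assoc]
            apply mul_le_mul_left
            rw [show ((4 : ENNReal))⁻¹ = (2 : ENNReal)⁻¹ * 2⁻¹ by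
              rw [← ENNReal.mul_inv (by norm_num) (by norm_num)]; norm_num]
            rw [← mul_assoc]
            simp [ENNReal.mul_inv_cancel]
          calc ε / 2 + 2 * (ε / 4) ≤ ε / 2 + ε / 2 := add_le_add_right this _
            _ = ε := ENNReal.add_halves ε
  
/-- `mstar` agrees with `γ` on measurable rectangles. -/
lemma IsRB.mstar_rect {A : Set X} {B : Set Y} (hA : MeasurableSet A)
    (hB : MeasurableSet B) : h.mstar (A ×ˢ B) = γ A B := by
  refine le_antisymm ((h.mstar_le_rho _).trans (rho_le hA hB subset_rfl)) ?_
  refine ENNReal.le_of_forall_pos_le_add fun ε hε hfin => ?_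
  have hε' : (ε : ENNReal) ≠ 0 := by exact_mod_cast hε.ne'
  obtain ⟨C, D, hC, hD, hcov, hle⟩ := h.mstar_exists_cover (A ×ˢ B) hε'
  exact (h.cover_countable hA hB C D hC hD hcov).trans hle

/-- Measurable rectangles are Carathéodory-measurable for `mstar`. -/
lemma IsRB.carath_rect {A : Set X} {B : Set Y} (hA : MeasurableSet A)
    (hB : MeasurableSet B) :
    MeasurableSet[h.mstar.caratheodory] (A ×ˢ B) := by
  rw [OuterMeasure.isCaratheodory_iff_le]
  intro S
  refine ENNReal.le_of_forall_pos_le_add fun ε hε hfin => ?_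
  have h2 : ((ε : ENNReal) / 2) ≠ 0 := by
    simp only [ne_eq, ENNReal.div_eq_zero_iff]
    push_neg
    exact ⟨by exact_mod_cast hε.ne', by norm_num⟩
  obtain ⟨C, D, hC, hD, hcov, hle⟩ := h.mstar_exists_cover S h2
  set R := A ×ˢ B with hRdef
  have m1 : h.mstar (S ∩ R) ≤ ∑' n, γ (C n ∩ A) (D n ∩ B) := by
    have hsub : S ∩ R ⊆ ⋃ n, (C n ∩ A) ×ˢ (D n ∩ B) := by
      rintro ⟨x, y⟩ ⟨hS, hR⟩
      obtain ⟨n, hn⟩ := Set.mem_iUnion.mp (hcov hS)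
      exact Set.mem_iUnion.mpr ⟨n, ⟨⟨hn.1, hR.1⟩, ⟨hn.2, hR.2⟩⟩⟩
    calc h.mstar (S ∩ R) ≤ h.mstar (⋃ n, (C n ∩ A) ×ˢ (D n ∩ B)) := measure_mono hsub
      _ ≤ ∑' n, h.mstar ((C n ∩ A) ×ˢ (D n ∩ B)) := measure_iUnion_le _
      _ ≤ ∑' n, γ (C n ∩ A) (D n ∩ B) := ENNReal.tsum_le_tsum fun n =>
          (h.mstar_le_rho _).trans (rho_le ((hC n).inter hA) ((hD n).inter hB) subset_rfl)
  have m2 : h.mstar (S \ R) ≤ ∑' n, (γ (C n \ A) (D n) + γ (C n ∩ A) (D n \ B)) := by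
    have hsub : S \ R ⊆ ⋃ n, ((C n \ A) ×ˢ D n ∪ (C n ∩ A) ×ˢ (D n \ B)) := by
      rintro ⟨x, y⟩ ⟨hS, hR⟩
      obtain ⟨n, hn⟩ := Set.mem_iUnion.mp (hcov hS)
      refine Set.mem_iUnion.mpr ⟨n, ?_⟩
      by_cases hx : x ∈ A
      · right
        refine ⟨⟨hn.1, hx⟩, hn.2, fun hy => hR ⟨hx, hy⟩⟩
      · left
        exact ⟨⟨hn.1, hx⟩, hn.2⟩
    calc h.mstar (S \ R) ≤ h.mstar (⋃ n, ((C n \ A) ×ˢ D n ∪ (C n ∩ A) ×ˢ (D n \ B))) :=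
          measure_mono hsub
      _ ≤ ∑' n, h.mstar ((C n \ A) ×ˢ D n ∪ (C n ∩ A) ×ˢ (D n \ B)) := measure_iUnion_le _
      _ ≤ ∑' n, (γ (C n \ A) (D n) + γ (C n ∩ A) (D n \ B)) := by
          refine ENNReal.tsum_le_tsum fun n => ?_
          refine (measure_union_le _ _).trans (add_le_add ?_ ?_)
          · exact (h.mstar_le_rho _).trans (rho_le ((hC n).diff hA) (hD n) subset_rfl)
          · exact (h.mstar_le_rho _).trans
              (rho_le ((hC n).inter hA) ((hD n).diff hB) subset_rfl)
  calc h.mstar (S ∩ R) + h.mstar (S \ R)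
      ≤ (∑' n, γ (C n ∩ A) (D n ∩ B)) + ∑' n, (γ (C n \ A) (D n) + γ (C n ∩ A) (D n \ B)) :=
        add_le_add m1 m2
    _ = ∑' n, (γ (C n ∩ A) (D n ∩ B) + (γ (C n \ A) (D n) + γ (C n ∩ A) (D n \ B))) :=
        ENNReal.tsum_add.symm
    _ = ∑' n, γ (C n) (D n) := by
        refine tsum_congr fun n => ?_
        have e1 : γ (C n) (D n) = γ (C n ∩ A) (D n) + γ (C n \ A) (D n) :=
          h.split_left (hC n) hA (hD n)
        have e2 : γ (C n ∩ A) (D n) = γ (C n ∩ A) (D n ∩ B) + γ (C n ∩ A) (D n \ B) :=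
          h.split_right ((hC n).inter hA) (hD n) hB
        rw [e1, e2]
        ring
    _ ≤ h.mstar S + ε / 2 := hle
    _ ≤ h.mstar S + ε := add_le_add_right (ENNReal.half_le_self) _

omit h in
/-- A compact set inside an open set of the product is covered by finitely many open
rectangles inside that open set. -/
lemma finite_rect_cover {C W : Set (X × Y)} (hC : IsCompact C) (hW : IsOpen W)
    (hCW : C ⊆ W) :
    ∃ T : Finset (Set X × Set Y), (∀ p ∈ T, IsOpen p.1 ∧ IsOpen p.2) ∧
      C ⊆ (⋃ p ∈ T, p.1 ×ˢ p.2) ∧ (⋃ p ∈ T, p.1 ×ˢ p.2) ⊆ W := by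
  classical
  have hz : ∀ z : C, ∃ p : Set X × Set Y, IsOpen p.1 ∧ IsOpen p.2 ∧
      (z : X × Y).1 ∈ p.1 ∧ (z : X × Y).2 ∈ p.2 ∧ p.1 ×ˢ p.2 ⊆ W := by
    rintro ⟨⟨x, y⟩, hzC⟩
    obtain ⟨u, v, hu, hv, hxu, hyv, huv⟩ := (isOpen_prod_iff.mp hW) x y (hCW hzC)
    exact ⟨(u, v), hu, hv, hxu, hyv, huv⟩
  choose O hO1 hO2 hOx hOy hOW using hz
  have hcov : C ⊆ ⋃ z : C, (O z).1 ×ˢ (O z).2 := by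
    intro z hzC
    exact Set.mem_iUnion.mpr ⟨⟨z, hzC⟩, hOx ⟨z, hzC⟩, hOy ⟨z, hzC⟩⟩
  obtain ⟨F, hF⟩ := hC.elim_finite_subcover (fun z : C => (O z).1 ×ˢ (O z).2)
    (fun z => (hO1 z).prod (hO2 z)) hcov
  refine ⟨F.image O, ?_, ?_, ?_⟩
  · intro p hp
    obtain ⟨z, _, rfl⟩ := Finset.mem_image.mp hp
    exact ⟨hO1 z, hO2 z⟩
  · refine hF.trans ?_
    intro w hw
    obtain ⟨z, hzF, hzw⟩ := Set.mem_iUnion₂.mp hw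
    exact Set.mem_iUnion₂.mpr ⟨O z, Finset.mem_image_of_mem O hzF, hzw⟩
  · refine Set.iUnion₂_subset fun p hp => ?_
    obtain ⟨z, _, rfl⟩ := Finset.mem_image.mp hp
    exact hOW z

/-- `mstar` is additive on disjoint compact sets. -/
lemma IsRB.mstar_union_disjoint {C₁ C₂ : Set (X × Y)} (h1 : IsCompact C₁)
    (h2 : IsCompact C₂) (hd : Disjoint C₁ C₂) :
    h.mstar (C₁ ∪ C₂) = h.mstar C₁ + h.mstar C₂ := by
  refine le_antisymm (measure_union_le _ _) ?_
  obtain ⟨T, hTo, hTcov, hTW⟩ := finite_rect_cover h1 h2.isClosed.isOpen_compl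
    (Set.subset_compl_iff_disjoint_right.mpr hd)
  set M := ⋃ p ∈ T, p.1 ×ˢ p.2 with hMdef
  have hM : MeasurableSet[h.mstar.caratheodory] M := by
    refine MeasurableSet.biUnion T.countable_toSet fun p hp => ?_
    exact h.carath_rect (hTo p hp).1.measurableSet (hTo p hp).2.measurableSet
  have hcar := (OuterMeasure.isCaratheodory_iff h.mstar).mp hM (C₁ ∪ C₂)
  rw [hcar]
  have hsub1 : C₁ ⊆ (C₁ ∪ C₂) ∩ M := Set.subset_inter Set.subset_union_left hTcov
  have hsub2 : C₂ ⊆ (C₁ ∪ C₂) \ M := by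
    refine Set.subset_diff.mpr ⟨Set.subset_union_right, ?_⟩
    exact Set.disjoint_left.mpr fun z hz hzM => (hTW hzM) hz
  exact add_le_add (measure_mono hsub1) (measure_mono hsub2)

/-- The content on compact subsets of `X × Y` induced by `mstar`. -/
noncomputable def IsRB.content : Content (X × Y) where
  toFun C := (h.mstar C).toNNReal
  mono' K₁ K₂ hK := ENNReal.toNNReal_mono (h.mstar_ne_top _) (measure_mono hK)
  sup_disjoint' K₁ K₂ hd _ _ := by
    have : h.mstar (K₁ ⊔ K₂ : TopologicalSpace.Compacts (X × Y)) = h.mstar K₁ + h.mstar K₂ := by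
      rw [TopologicalSpace.Compacts.coe_sup]
      exact h.mstar_union_disjoint K₁.isCompact K₂.isCompact hd
    rw [this, ENNReal.toNNReal_add (h.mstar_ne_top _) (h.mstar_ne_top _)]
  sup_le' K₁ K₂ := by
    have h1 : h.mstar (K₁ ⊔ K₂ : TopologicalSpace.Compacts (X × Y)) ≤ h.mstar K₁ + h.mstar K₂ := by
      rw [TopologicalSpace.Compacts.coe_sup]
      exact measure_union_le _ _
    have := ENNReal.toNNReal_mono
      (by exact ENNReal.add_ne_top.mpr ⟨h.mstar_ne_top _, h.mstar_ne_top _⟩) h1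
    rwa [ENNReal.toNNReal_add (h.mstar_ne_top _) (h.mstar_ne_top _)] at this

lemma IsRB.content_apply (K : TopologicalSpace.Compacts (X × Y)) :
    (h.content K : ENNReal) = h.mstar K := by
  simp only [IsRB.content, Content.mk_apply]
  exact ENNReal.coe_toNNReal (h.mstar_ne_top _)

section Final

set_option maxHeartbeats 1000000

variable [MeasurableSpace (X × Y)] [BorelSpace (X × Y)]

lemma IsRB.measure_compact_rect {K : Set X} {L : Set Y} (hK : IsCompact K)
    (hL : IsCompact L) : γ K L ≤ h.content.measure (K ×ˢ L) := by
  have hmeas : MeasurableSet (K ×ˢ L) := (hK.prod hL).isClosed.measurableSet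
  rw [Content.measure_apply _ hmeas]
  calc γ K L = h.mstar (K ×ˢ L) :=
        (h.mstar_rect hK.isClosed.measurableSet hL.isClosed.measurableSet).symm
    _ = h.content ⟨K ×ˢ L, hK.prod hL⟩ := (h.content_apply ⟨K ×ˢ L, hK.prod hL⟩).symm
    _ ≤ h.content.outerMeasure (K ×ˢ L) :=
        h.content.le_outerMeasure_compacts ⟨K ×ˢ L, hK.prod hL⟩

lemma IsRB.measure_open_rect {U : Set X} {V : Set Y} (hU : IsOpen U) (hV : IsOpen V) :
    h.content.measure (U ×ˢ V) ≤ γ U V := by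
  rw [Content.measure_apply _ (hU.prod hV).measurableSet,
    h.content.outerMeasure_of_isOpen (U ×ˢ V) (hU.prod hV)]
  have hIC : h.content.innerContent ⟨U ×ˢ V, hU.prod hV⟩
      = ⨆ (K : TopologicalSpace.Compacts (X × Y)) (_ : (K : Set (X × Y)) ⊆ U ×ˢ V),
          (h.content K : ENNReal) := rfl
  rw [hIC]
  refine iSup₂_le fun K hKU => ?_
  rw [h.content_apply K]
  calc h.mstar (K : Set (X × Y)) ≤ h.mstar (U ×ˢ V) := measure_mono hKU
    _ = γ U V := h.mstar_rect hU.measurableSet hV.measurableSet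

lemma IsRB.measure_rect {A : Set X} {B : Set Y} (hA : MeasurableSet A)
    (hB : MeasurableSet B) : h.content.measure (A ×ˢ B) = γ A B := by
  refine le_antisymm ?_ ?_
  · refine ENNReal.le_of_forall_pos_le_add fun ε hε hfin => ?_
    have hε' : (ε : ENNReal) ≠ 0 := by exact_mod_cast hε.ne'
    obtain ⟨U, V, hUo, hAU, hVo, hBV, hle⟩ := h.exists_open_rect hA hB hε'
    calc h.content.measure (A ×ˢ B) ≤ h.content.measure (U ×ˢ V) :=
          measure_mono (Set.prod_mono hAU hBV)
      _ ≤ γ U V := h.measure_open_rect hUo hVo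
      _ ≤ γ A B + ε := hle
  · refine ENNReal.le_of_forall_pos_le_add fun ε hε hfin => ?_
    have hε' : (ε : ENNReal) ≠ 0 := by exact_mod_cast hε.ne'
    obtain ⟨K, L, hKc, hKA, hLc, hLB, hKL⟩ := h.exists_compact_rect hA hB hε'
    calc γ A B ≤ γ K L + ε := hKL
      _ ≤ h.content.measure (K ×ˢ L) + ε :=
          add_le_add_left (h.measure_compact_rect hKc hLc) _
      _ ≤ h.content.measure (A ×ˢ B) + ε :=
          add_le_add_left (measure_mono (Set.prod_mono hKA hLB)) _

lemma IsRB.isProbability : IsProbabilityMeasure h.content.measure := by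
  constructor
  have huniv : (Set.univ : Set (X × Y)) = Set.univ ×ˢ Set.univ := Set.univ_prod_univ.symm
  rw [huniv, h.measure_rect MeasurableSet.univ MeasurableSet.univ, h.total]

lemma IsRB.innerRegular : h.content.measure.InnerRegular := by
  haveI := h.isProbability
  infer_instance

end Final

end RadonBimeasure

/-- Every Radon probability bimeasure on compact Hausdorff spaces `X, Y` (countably
additive and inner regular by compact sets separately in each variable, with total mass 1)
extends to a Radon probability measure on the Borel σ-algebra of `X × Y`. -/
theorem radon_bimeasure_extends
    {X Y : Type*} [TopologicalSpace X] [CompactSpace X] [T2Space X]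
    [TopologicalSpace Y] [CompactSpace Y] [T2Space Y]
    (γ : Set X → Set Y → ENNReal)
    -- `γ` is `[0,1]`-valued with `γ(X,Y) = 1`
    (hbound : ∀ A B, γ A B ≤ 1)
    (htotal : γ Set.univ Set.univ = 1)
    -- countably additive in each variable separately, on Borel sets
    (haddLeft : ∀ B : Set Y, MeasurableSet[borel Y] B → ∀ A : ℕ → Set X,
      (∀ n, MeasurableSet[borel X] (A n)) → Pairwise (Function.onFun Disjoint A) →
      γ (⋃ n, A n) B = ∑' n, γ (A n) B)
    (haddRight : ∀ A : Set X, MeasurableSet[borel X] A → ∀ B : ℕ → Set Y,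
      (∀ n, MeasurableSet[borel Y] (B n)) → Pairwise (Function.onFun Disjoint B) →
      γ A (⋃ n, B n) = ∑' n, γ A (B n))
    -- inner regular by compact sets separately in each variable
    (hregLeft : ∀ A B, MeasurableSet[borel X] A → MeasurableSet[borel Y] B →
      γ A B = ⨆ (K : Set X) (_ : IsCompact K ∧ K ⊆ A), γ K B)
    (hregRight : ∀ A B, MeasurableSet[borel X] A → MeasurableSet[borel Y] B →
      γ A B = ⨆ (L : Set Y) (_ : IsCompact L ∧ L ⊆ B), γ A L) :
    ∃ p : @Measure (X × Y) (borel (X × Y)),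
      @IsProbabilityMeasure (X × Y) (borel (X × Y)) p ∧
      @Measure.InnerRegular (X × Y) (borel (X × Y)) _ p ∧
      ∀ (A : Set X) (B : Set Y), MeasurableSet[borel X] A → MeasurableSet[borel Y] B →
        p (A ×ˢ B) = γ A B := by
  letI mX : MeasurableSpace X := borel X
  haveI : BorelSpace X := ⟨rfl⟩
  letI mY : MeasurableSpace Y := borel Y
  haveI : BorelSpace Y := ⟨rfl⟩
  letI mXY : MeasurableSpace (X × Y) := borel (X × Y)
  haveI : BorelSpace (X × Y) := ⟨rfl⟩
  have hRB : RadonBimeasure.IsRB γ :=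
    ⟨hbound, htotal, haddLeft, haddRight, hregLeft, hregRight⟩
  exact ⟨hRB.content.measure, hRB.isProbability, hRB.innerRegular,
    fun A B hA hB => hRB.measure_rect hA hB⟩
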